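/- Let y = (y_1, y_2, ..., y_n) be a vector of n positive integer car lengths, let d ∈ [n], and let w = (w_1,...,w_d) be a vector of d integers all greater than 1. If the vector (1^{n−d}, w), consisting of n−d entries equal to 1 followed by the entries of w, is in PAinv_n(y), then for every i ∈ [d], the vector (1^{n−d+1}, w_{î}) obtained by deleting the i-th entry of w and prepending one additional 1 is also in PAinv_n(y). -/

import Mathlib

/-- Car with preference `pref` and length `len` fits at spot `s`:
`pref ≤ s`, the spots `s, s+1, ..., s+len-1` all lie in the lot `[1, m]`,
and none of them is occupied. -/
def FitsAt (occ : Finset ℕ) (m pref len s : ℕ) : Prop :=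
  pref ≤ s ∧ s + len ≤ m + 1 ∧ ∀ t ∈ Finset.Ico s (s + len), t ∉ occ

/-- The car parks at `s`: `s` is the least spot (≥ its preference) where it fits. -/
def ParksAt (occ : Finset ℕ) (m pref len s : ℕ) : Prop :=
  FitsAt occ m pref len s ∧ ∀ s' < s, ¬ FitsAt occ m pref len s'

/-- Every car in the list of (preference, length) pairs can park, with
cars entering in order, starting from the set `occ` of occupied spots. -/
inductive Park (m : ℕ) : Finset ℕ → List (ℕ × ℕ) → Prop
  | nil (occ : Finset ℕ) : Park m occ []
  | cons (occ : Finset ℕ) (pref len : ℕ) (rest : List (ℕ × ℕ)) (s : ℕ) :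
      ParksAt occ m pref len s →
      Park m (occ ∪ Finset.Ico s (s + len)) rest →
      Park m occ ((pref, len) :: rest)

/-- `x` is a parking assortment for the length vector `y`. -/
def PA (y x : List ℕ) : Prop :=
  x.length = y.length ∧ (∀ v ∈ x, 1 ≤ v ∧ v ≤ y.sum) ∧ Park y.sum ∅ (x.zip y)

/-- `x` is a (permutation) invariant parking assortment for `y`. -/
def PAinv (y x : List ℕ) : Prop :=
  ∀ x' : List ℕ, x.Perm x' → PA y x'

/-- The degree of `x`: the number of entries of `x` different from 1. -/
def deg (x : List ℕ) : ℕ := (x.filter (fun v => v ≠ 1)).length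

/-- The characteristic of `y`: the greatest degree over all invariant
parking assortments for `y`. -/
noncomputable def chi (y : List ℕ) : ℕ := sSup {d | ∃ x, PAinv y x ∧ deg x = d}

/-- The invariant solution set of `y`. -/
def Wset (y : List ℕ) : Set ℕ :=
  {w | PAinv y (List.replicate (y.length - 1) 1 ++ [w])}
lemma parksAt_unique {occ m p l s s'} (h1 : ParksAt occ m p l s) (h2 : ParksAt occ m p l s') :
    s = s' := by
  rcases lt_trichotomy s s' with h | h | h
  · exact absurd h1.1 (h2.2 s h)
  · exact h
  · exact absurd h2.1 (h1.2 s' h)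

lemma park_cons_inv {m occ p l rest} (h : Park m occ ((p, l) :: rest)) :
    ∃ s, ParksAt occ m p l s ∧ Park m (occ ∪ Finset.Ico s (s + l)) rest := by
  cases h with
  | cons _ _ _ _ s hs hr => exact ⟨s, hs, hr⟩

/-- Coverage: with a tight lot, spots below every preference must be pre-occupied. -/
lemma cover (m : ℕ) : ∀ (cars : List (ℕ × ℕ)) (occ : Finset ℕ), Park m occ cars →
    occ ⊆ Finset.Icc 1 m → occ.card + (cars.map Prod.snd).sum = m →
    ∀ t, 1 ≤ t → t ≤ m → (∀ c ∈ cars, t < c.1) → t ∈ occ := by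
  intro cars
  induction cars with
  | nil =>
    intro occ _ hsub hcard t ht1 htm _
    have hocc : occ = Finset.Icc 1 m := by
      apply Finset.eq_of_subset_of_card_le hsub
      simp only [Nat.card_Icc]
      simp at hcard
      omega
    rw [hocc]
    simp only [Finset.mem_Icc]
    omega
  | cons c rest ih =>
    intro occ hp hsub hcard t ht1 htm hlt
    obtain ⟨p, l⟩ := c
    obtain ⟨s, hs, hr⟩ := park_cons_inv hp
    obtain ⟨hps, hsm, hdisj⟩ := hs.1
    have htp : t < p := hlt (p, l) (List.mem_cons_self)
    have hdis : Disjoint occ (Finset.Ico s (s + l)) := by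
      rw [Finset.disjoint_right]
      intro x hx
      exact hdisj x hx
    have hsub' : occ ∪ Finset.Ico s (s + l) ⊆ Finset.Icc 1 m := by
      apply Finset.union_subset hsub
      intro x hx
      simp only [Finset.mem_Ico] at hx
      simp only [Finset.mem_Icc]
      omega
    have hcard' : (occ ∪ Finset.Ico s (s + l)).card + (rest.map Prod.snd).sum = m := by
      rw [Finset.card_union_of_disjoint hdis, Nat.card_Ico]
      simp at hcard
      omega
    have := ih (occ ∪ Finset.Ico s (s + l)) hr hsub' hcard' t ht1 htm
      (fun c hc => hlt c (List.mem_cons_of_mem _ hc))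
    rcases Finset.mem_union.1 this with h | h
    · exact h
    · simp only [Finset.mem_Ico] at h
      omega

/-- A car with a small preference parks at the same place as the minimal-pref car,
provided all spots below `b` are occupied. -/
lemma parksAt_low {occ : Finset ℕ} {m v b l s : ℕ}
    (hcov : ∀ t, 1 ≤ t → t ≤ m → t < b → t ∈ occ)
    (hv1 : 1 ≤ v) (hvb : v ≤ b) (hl : 1 ≤ l)
    (h : ParksAt occ m b l s) : ParksAt occ m v l s := by
  have fits_ge : ∀ s', FitsAt occ m v l s' → b ≤ s' := by
    intro s' ⟨h1, h2, h3⟩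
    by_contra hlt
    push_neg at hlt
    have hs'occ : s' ∈ occ := hcov s' (le_trans hv1 h1) (by omega) hlt
    exact h3 s' (by simp [Finset.mem_Ico]; omega) hs'occ
  constructor
  · obtain ⟨h1, h2, h3⟩ := h.1
    exact ⟨le_trans hvb h1, h2, h3⟩
  · intro s' hs' hf
    have hb := fits_ge s' hf
    obtain ⟨_, h2, h3⟩ := hf
    exact h.2 s' hs' ⟨hb, h2, h3⟩

lemma perm_cons_eraseIdx : ∀ (l : List ℕ) (i : ℕ) (h : i < l.length),
    l.Perm (l[i] :: l.eraseIdx i) := by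
  intro l
  induction l with
  | nil => intro i h; simp at h
  | cons x t ih =>
    intro i h
    cases i with
    | zero => simp
    | succ j =>
      simp only [List.length_cons] at h
      have hj : j < t.length := by omega
      have h1 : (x :: t).Perm (x :: (t[j] :: t.eraseIdx j)) := List.Perm.cons x (ih j hj)
      have h2 : (x :: (t[j] :: t.eraseIdx j)).Perm (t[j] :: x :: t.eraseIdx j) :=
        List.Perm.swap _ _ _
      simpa using h1.trans h2

lemma list_exists_min : ∀ (p : List ℕ), p ≠ [] → ∃ b ∈ p, ∀ e ∈ p, b ≤ e := by
  intro p
  induction p with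
  | nil => intro h; exact absurd rfl h
  | cons x t ih =>
    intro _
    rcases eq_or_ne t [] with rfl | ht
    · exact ⟨x, List.mem_cons_self, by simp⟩
    · obtain ⟨b, hb, hmin⟩ := ih ht
      rcases le_total x b with h | h
      · refine ⟨x, List.mem_cons_self, ?_⟩
        intro e he
        rcases List.mem_cons.1 he with rfl | he
        · exact le_refl _
        · exact le_trans h (hmin e he)
      · refine ⟨b, List.mem_cons_of_mem _ hb, ?_⟩
        intro e he
        rcases List.mem_cons.1 he with rfl | he
        · exact h
        · exact hmin e he

lemma new3 : ∀ (N : ℕ) (p y : List ℕ) (occ : Finset ℕ) (m v a : ℕ),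
    p.length = N → p.length = y.length → (∀ e ∈ y, 0 < e) →
    occ ⊆ Finset.Icc 1 m → occ.card + y.sum = m →
    (∀ q : List ℕ, q.Perm p → Park m occ (q.zip y)) →
    1 ≤ v → (∀ e ∈ p, v ≤ e) → a ∈ p →
    ∀ Q : List ℕ, Q.Perm (v :: p.erase a) → Park m occ (Q.zip y) := by
  intro N
  induction N with
  | zero =>
    intro p y occ m v a hN _ _ _ _ _ _ _ ha Q _
    rw [List.length_eq_zero_iff] at hN; subst hN; simp at ha
  | succ N ih =>
    intro p y occ m v a hN hlen hypos hsub htight Hall hv1 hv ha Q hQ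
    obtain ⟨ℓ, y', rfl⟩ : ∃ ℓ y', y = ℓ :: y' := by
      cases y with
      | nil => rw [hN] at hlen; simp at hlen
      | cons ℓ y' => exact ⟨ℓ, y', rfl⟩
    have hl1 : 0 < ℓ := hypos ℓ (List.mem_cons_self)
    -- key: for any c ∈ p, running a perm of p with c first
    have key : ∀ c ∈ p, ∃ s, ParksAt occ m c ℓ s ∧
        (occ ∪ Finset.Ico s (s + ℓ)) ⊆ Finset.Icc 1 m ∧
        (occ ∪ Finset.Ico s (s + ℓ)).card + y'.sum = m ∧
        ∀ τ : List ℕ, τ.Perm (p.erase c) → Park m (occ ∪ Finset.Ico s (s + ℓ)) (τ.zip y') := by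
      intro c hc
      have hperm : (c :: p.erase c).Perm p := (List.perm_cons_erase hc).symm
      have h0 := Hall (c :: p.erase c) hperm
      rw [List.zip_cons_cons] at h0
      obtain ⟨s, hs, hr⟩ := park_cons_inv h0
      obtain ⟨hps, hsm, hdisj⟩ := hs.1
      have hc1 : 1 ≤ c := le_trans hv1 (hv c hc)
      refine ⟨s, hs, ?_, ?_, ?_⟩
      · apply Finset.union_subset hsub
        intro x hx
        simp only [Finset.mem_Ico] at hx
        simp only [Finset.mem_Icc]
        omega
      · have hdis : Disjoint occ (Finset.Ico s (s + ℓ)) := by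
          rw [Finset.disjoint_right]
          exact fun x hx => hdisj x hx
        rw [Finset.card_union_of_disjoint hdis, Nat.card_Ico]
        simp only [List.sum_cons] at htight
        omega
      · intro τ hτ
        have h1 := Hall (c :: τ) ((hτ.cons c).trans hperm)
        rw [List.zip_cons_cons] at h1
        obtain ⟨s2, hs2, hr2⟩ := park_cons_inv h1
        rwa [parksAt_unique hs2 hs] at hr2
    obtain ⟨q, ρ, rfl⟩ : ∃ q ρ, Q = q :: ρ := by
      cases Q with
      | nil => have := hQ.length_eq; simp at this
      | cons q ρ => exact ⟨q, ρ, rfl⟩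
    have hqmem : q ∈ (v :: p.erase a) := hQ.subset (List.mem_cons_self)
    have hρ : ρ.Perm ((v :: p.erase a).erase q) :=
      (hQ.trans (List.perm_cons_erase hqmem)).cons_inv
    rw [List.zip_cons_cons]
    by_cases hq : q ∈ p.erase a
    · -- route (a): q is a genuine entry of p (other than the a-occurrence)
      have hqp : q ∈ p := List.mem_of_mem_erase hq
      have hρ' : ρ.Perm (v :: (p.erase q).erase a) := by
        rcases eq_or_ne q v with rfl | hne
        · have h0 : ρ.Perm (p.erase a) := by rwa [List.erase_cons_head] at hρ
          have h2 : (p.erase a).Perm (q :: (p.erase a).erase q) := List.perm_cons_erase hq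
          rw [List.erase_comm] at h2
          exact h0.trans h2
        · have hrw : (v :: p.erase a).erase q = v :: (p.erase a).erase q :=
            List.erase_cons_tail (by simpa using (Ne.symm hne))
          rw [hrw, List.erase_comm] at hρ
          exact hρ
      obtain ⟨s, hs, hsub1, htight1, hall'⟩ := key q hqp
      have haq : a ∈ p.erase q := by
        rcases eq_or_ne a q with rfl | hne
        · exact hq
        · exact (List.mem_erase_of_ne hne).2 ha
      have hNe : (p.erase q).length = N := by
        rw [List.length_erase_of_mem hqp, hN]; omega
      have hlen' : (p.erase q).length = y'.length := by
        rw [hNe]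
        rw [hN] at hlen
        simp only [List.length_cons] at hlen
        omega
      exact Park.cons occ q ℓ _ s hs
        (ih (p.erase q) y' _ m v a hNe hlen'
          (fun e he => hypos e (List.mem_cons_of_mem _ he)) hsub1 htight1 hall' hv1
          (fun e he => hv e (List.mem_of_mem_erase he)) haq ρ hρ')
    · -- route (b): q = v
      have hqv : q = v := by
        rcases List.mem_cons.1 hqmem with h | h
        · exact h
        · exact absurd h hq
      subst hqv
      have hρa : ρ.Perm (p.erase a) := by rwa [List.erase_cons_head] at hρ
      have hcovgen : ∀ b, (∀ e ∈ p, b ≤ e) → ∀ t, 1 ≤ t → t ≤ m → t < b → t ∈ occ := by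
        intro b hbmin t ht1 htm htb
        refine cover m (p.zip (ℓ :: y')) occ (Hall p (List.Perm.refl p)) hsub ?_ t ht1 htm ?_
        · rw [List.map_snd_zip (le_of_eq hlen.symm)]
          exact htight
        · intro c hc
          exact lt_of_lt_of_le htb (hbmin c.1 (List.of_mem_zip hc).1)
      by_cases hamin : ∀ e ∈ p, a ≤ e
      · obtain ⟨s2, hs2, _, _, hall2⟩ := key a ha
        have hsv2 : ParksAt occ m q ℓ s2 :=
          parksAt_low (hcovgen a hamin) hv1 (hv a ha) hl1 hs2
        exact Park.cons occ q ℓ _ s2 hsv2 (hall2 ρ hρa)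
      · push_neg at hamin
        obtain ⟨e0, he0, he0a⟩ := hamin
        have hpne : p ≠ [] := by
          intro h; rw [h] at ha; simp at ha
        obtain ⟨b, hbp, hbmin⟩ := list_exists_min p hpne
        have hba : b < a := lt_of_le_of_lt (hbmin e0 he0) he0a
        obtain ⟨s, hs, hsub1, htight1, hall'⟩ := key b hbp
        have hsv : ParksAt occ m q ℓ s :=
          parksAt_low (hcovgen b hbmin) hv1 (hv b hbp) hl1 hs
        have hab : a ∈ p.erase b := (List.mem_erase_of_ne (by omega)).2 ha
        have hNe : (p.erase b).length = N := by
          rw [List.length_erase_of_mem hbp, hN]; omega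
        have hlen' : (p.erase b).length = y'.length := by
          rw [hNe]
          rw [hN] at hlen
          simp only [List.length_cons] at hlen
          omega
        have hρb : ρ.Perm (b :: (p.erase b).erase a) := by
          have hbpa : b ∈ p.erase a := (List.mem_erase_of_ne (by omega)).2 hbp
          have h2 : (p.erase a).Perm (b :: (p.erase a).erase b) := List.perm_cons_erase hbpa
          rw [List.erase_comm] at h2
          exact hρa.trans h2
        exact Park.cons occ q ℓ _ s hsv
          (ih (p.erase b) y' _ m b a hNe hlen'
            (fun e he => hypos e (List.mem_cons_of_mem _ he)) hsub1 htight1 hall'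
            (le_trans hv1 (hv b hbp))
            (fun e he => hbmin e (List.mem_of_mem_erase he)) hab ρ hρb)


/-- if `(1^{n−d}, w) ∈ PAinv_n(y)` with all entries of `w` greater
than 1, then for every `i ∈ [d]` (0-based `i < d` below), the vector
`(1^{n−d+1}, w_{î})` is also in `PAinv_n(y)`. -/
theorem stmt10 (n d : ℕ) (hn : 0 < n) (hd1 : 1 ≤ d) (hdn : d ≤ n)
    (y : List ℕ) (hylen : y.length = n) (hypos : ∀ v ∈ y, 0 < v)
    (w : List ℕ) (hwlen : w.length = d) (hw : ∀ v ∈ w, 1 < v)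
    (hx : PAinv y (List.replicate (n - d) 1 ++ w)) :
    ∀ i < d, PAinv y (List.replicate (n - d + 1) 1 ++ w.eraseIdx i) := by
  intro i hid x' hperm
  have hiw : i < w.length := by omega
  set p := List.replicate (n - d) 1 ++ w with hp
  set a := w[i] with hadef
  have hx0 : PA y p := hx p (List.Perm.refl p)
  have haw : a ∈ w := List.getElem_mem hiw
  have ha1 : 1 < a := hw a haw
  have hap : a ∈ p := List.mem_append_right _ haw
  have hplen : p.length = n := by
    simp [hp, hwlen]
    omega
  have hsum_pos : 0 < y.sum := by
    cases y with
    | nil => rw [← hylen] at hn; simp at hn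
    | cons h t =>
      have := hypos h (List.mem_cons_self)
      simp only [List.sum_cons]
      omega
  have hew : (w.eraseIdx i).Perm (w.erase a) := by
    have h1 : w.Perm (a :: w.eraseIdx i) := perm_cons_eraseIdx w i hiw
    have h2 : w.Perm (a :: w.erase a) := List.perm_cons_erase haw
    exact (h1.symm.trans h2).cons_inv
  have hperase : p.erase a = List.replicate (n - d) 1 ++ w.erase a := by
    rw [hp]
    apply List.erase_append_right
    intro hmem
    have := List.eq_of_mem_replicate hmem
    omega
  have hchain : x'.Perm (1 :: p.erase a) := by
    have h0 : (List.replicate (n - d + 1) 1 ++ w.eraseIdx i)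
        = 1 :: (List.replicate (n - d) 1 ++ w.eraseIdx i) := by
      rw [List.replicate_succ]
      simp
    have h1 : x'.Perm (1 :: (List.replicate (n - d) 1 ++ w.eraseIdx i)) := by
      rw [← h0]; exact hperm.symm
    refine h1.trans (List.Perm.cons 1 ?_)
    rw [hperase]
    exact (hew.append_left _)
  constructor
  · -- length
    have h1 := hperm.length_eq
    simp only [List.length_append, List.length_replicate, List.length_eraseIdx, hiw,
      hwlen, hid, if_true] at h1
    omega
  refine ⟨?_, ?_⟩
  · -- bounds
    intro u hu
    have hu' : u ∈ List.replicate (n - d + 1) 1 ++ w.eraseIdx i := (hperm.symm).subset hu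
    rcases List.mem_append.1 hu' with h | h
    · have : u = 1 := List.eq_of_mem_replicate h
      subst this
      exact ⟨le_refl 1, hsum_pos⟩
    · have huw : u ∈ w := (List.eraseIdx_sublist w i).subset h
      exact hx0.2.1 u (List.mem_append_right _ huw)
  · -- Park
    refine new3 n p y ∅ y.sum 1 a hplen (by rw [hplen, hylen]) hypos
      (Finset.empty_subset _) (by simp) ?_ (le_refl 1) ?_ hap x' hchain
    · intro q hq
      exact (hx q hq.symm).2.2
    · intro e he
      rcases List.mem_append.1 he with h | h
      · exact le_of_eq (List.eq_of_mem_replicate h).symm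
      · exact le_of_lt (hw e h)
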